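/- Let p ∈ ℕ and k = (k⁽¹⁾, k⁽²⁾) ∈ ℤ²∖{0}, and define V : 𝕋² → M₂(ℂ) by V(φ) = (2/|k|^p) cos(k⁽¹⁾φ₁) cos(k⁽²⁾φ₂) σ⁽¹⁾. Then ‖V‖_{C^p} = 2 (max{|k⁽¹⁾|, |k⁽²⁾|})^p / |k|^p, and in particular 2^{1−p} ≤ ‖V‖_{C^p} ≤ 2. -/

import Mathlib

open Real

noncomputable section

/-- Partial derivative in the coordinate direction `j`. -/
def pderiv1 {n : ℕ} {E : Type*} [NormedAddCommGroup E] [NormedSpace ℝ E]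
    (j : Fin n) (f : (Fin n → ℝ) → E) : (Fin n → ℝ) → E :=
  fun x => fderiv ℝ f x (Pi.single j 1)

/-- Iterated partial derivative along a list of coordinate directions. -/
def listPDeriv {n : ℕ} {E : Type*} [NormedAddCommGroup E] [NormedSpace ℝ E]
    (f : (Fin n → ℝ) → E) : List (Fin n) → ((Fin n → ℝ) → E)
  | [] => f
  | j :: js => pderiv1 j (listPDeriv f js)

/-- The `C^p` norm: sup over all iterated partial derivatives of order `≤ p` of the sup norm. -/
def CpNorm {n : ℕ} {E : Type*} [NormedAddCommGroup E] [NormedSpace ℝ E]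
    (p : ℕ) (f : (Fin n → ℝ) → E) : ℝ :=
  sSup {r : ℝ | ∃ (ms : List (Fin n)) (x : Fin n → ℝ), ms.length ≤ p ∧ r = ‖listPDeriv f ms x‖}

/-- The first Pauli matrix, as a continuous linear operator on `ℂ²` (so that the norm is the
operator norm). -/
def pauli1CLM : EuclideanSpace ℂ (Fin 2) →L[ℂ] EuclideanSpace ℂ (Fin 2) :=
  Matrix.toEuclideanCLM (𝕜 := ℂ) !![0, 1; 1, 0]

end

/-! ### Auxiliary lemmas -/

/-- `gg k a t` is the `a`-th derivative of `t ↦ cos (k t)`. -/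
noncomputable def gg (k : ℝ) (a : ℕ) (t : ℝ) : ℝ := k ^ a * Real.cos (k * t + a * (π / 2))

lemma gg_hasDerivAt (k : ℝ) (a : ℕ) (t : ℝ) : HasDerivAt (gg k a) (gg k (a+1) t) t := by
  have h1 : HasDerivAt (fun t : ℝ => k * t + a * (π/2)) k t := by
    simpa using ((hasDerivAt_id t).const_mul k).add_const ((a:ℝ) * (π/2))
  have h2 := (h1.cos).const_mul (k ^ a)
  refine h2.congr_deriv ?_
  unfold gg
  push_cast
  rw [show k * t + ((a:ℝ)+1) * (π/2) = (k*t + a*(π/2)) + π/2 by ring,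
    Real.cos_add_pi_div_two]
  ring

lemma gg_abs_le (k : ℝ) (a : ℕ) (t : ℝ) : |gg k a t| ≤ |k| ^ a := by
  unfold gg
  rw [abs_mul, abs_pow]
  calc |k|^a * |Real.cos (k*t + a*(π/2))| ≤ |k|^a * 1 := by
        gcongr; exact Real.abs_cos_le_one _
    _ = |k|^a := mul_one _

lemma gg_exists_max (k : ℝ) (a : ℕ) : ∃ t, |gg k a t| = |k| ^ a := by
  rcases eq_or_ne k 0 with hk | hk
  · subst hk
    cases a with
    | zero => exact ⟨0, by simp [gg]⟩
    | succ n => exact ⟨0, by simp [gg]⟩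
  · refine ⟨-((a:ℝ) * (π/2)) / k, ?_⟩
    unfold gg
    rw [show k * (-((a:ℝ) * (π/2)) / k) + a * (π/2) = 0 by field_simp; ring]
    simp [abs_pow]

set_option linter.unnecessarySeqFocus false in
lemma key_pderiv {E : Type*} [NormedAddCommGroup E] [NormedSpace ℝ E]
    (A k1 k2 : ℝ) (a b : ℕ) (T : E) (j : Fin 2) :
    pderiv1 j (fun x : Fin 2 → ℝ => (A * gg k1 a (x 0) * gg k2 b (x 1)) • T) =
    fun x : Fin 2 → ℝ =>
      (A * gg k1 (a + if j = 0 then 1 else 0) (x 0) *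
        gg k2 (b + if j = 1 then 1 else 0) (x 1)) • T := by
  funext x
  have hu : HasFDerivAt (fun x : Fin 2 → ℝ => gg k1 a (x 0))
      ((gg k1 (a+1) (x 0)) • ContinuousLinearMap.proj (R := ℝ) (φ := fun _ : Fin 2 => ℝ) 0) x :=
    by have := (gg_hasDerivAt k1 a (x 0)).comp_hasFDerivAt x
        (ContinuousLinearMap.proj (R := ℝ) (φ := fun _ : Fin 2 => ℝ) 0).hasFDerivAt; exact this
  have hw : HasFDerivAt (fun x : Fin 2 → ℝ => gg k2 b (x 1))
      ((gg k2 (b+1) (x 1)) • ContinuousLinearMap.proj (R := ℝ) (φ := fun _ : Fin 2 => ℝ) 1) x :=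
    by have := (gg_hasDerivAt k2 b (x 1)).comp_hasFDerivAt x
        (ContinuousLinearMap.proj (R := ℝ) (φ := fun _ : Fin 2 => ℝ) 1).hasFDerivAt; exact this
  have hh := (hu.const_mul A).mul hw
  have hF : HasFDerivAt (fun x : Fin 2 → ℝ => (A * gg k1 a (x 0) * gg k2 b (x 1)) • T) _ x :=
    hh.smul (hasFDerivAt_const T x)
  rw [pderiv1, hF.fderiv]
  fin_cases j <;>
    simp [ContinuousLinearMap.smul_apply, ContinuousLinearMap.proj_apply,
      Pi.single_eq_same, Pi.single_eq_of_ne, gg] <;>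
  · rw [show ((a:ℝ)+1) = ((a+1 : ℕ) : ℝ) by push_cast; ring] <;> module

lemma pauli_apply (x : EuclideanSpace ℂ (Fin 2)) :
    pauli1CLM x = (WithLp.equiv 2 (Fin 2 → ℂ)).symm ![x 1, x 0] := by
  have := Matrix.ofLp_toEuclideanCLM (𝕜 := ℂ) !![(0:ℂ), 1; 1, 0] x
  apply (WithLp.equiv 2 (Fin 2 → ℂ)).injective
  rw [show pauli1CLM x = (Matrix.toEuclideanCLM (𝕜 := ℂ) !![0, 1; 1, 0]) x from rfl, WithLp.equiv_apply, this]
  funext i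
  fin_cases i <;>
    simp [Matrix.toLin'_apply, Matrix.mulVec, dotProduct, Fin.sum_univ_two]

lemma pauli_norm_apply (x : EuclideanSpace ℂ (Fin 2)) : ‖pauli1CLM x‖ = ‖x‖ := by
  rw [pauli_apply, EuclideanSpace.norm_eq, EuclideanSpace.norm_eq]
  simp [Fin.sum_univ_two]
  ring_nf

lemma pauli_opNorm : ‖pauli1CLM‖ = 1 := by
  refine le_antisymm (pauli1CLM.opNorm_le_bound zero_le_one fun x => by
    rw [pauli_norm_apply, one_mul]) ?_
  have h := pauli1CLM.le_opNorm (EuclideanSpace.single 0 1)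
  rw [pauli_norm_apply] at h
  simpa using h

lemma count_sum_le (ms : List (Fin 2)) : ms.count 0 + ms.count 1 ≤ ms.length := by
  induction ms with
  | nil => simp
  | cons j js ih =>
    fin_cases j <;> simp [List.count_cons] <;> omega

/-- The `C^p` norm of `V(φ) = (2/|k|^p) cos(k⁽¹⁾φ₁) cos(k⁽²⁾φ₂) σ⁽¹⁾` equals
`2 (max{|k⁽¹⁾|,|k⁽²⁾|})^p / |k|^p`, and in particular lies in `[2^{1-p}, 2]`. -/
theorem stmt12 (p : ℕ) (k : ℤ × ℤ) (hk : k ≠ 0)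
    (V : (Fin 2 → ℝ) → (EuclideanSpace ℂ (Fin 2) →L[ℂ] EuclideanSpace ℂ (Fin 2)))
    (hV : ∀ φ : Fin 2 → ℝ, V φ =
      ((2 / ((|k.1| : ℝ) + (|k.2| : ℝ)) ^ p * Real.cos ((k.1 : ℝ) * φ 0) *
          Real.cos ((k.2 : ℝ) * φ 1) : ℝ) : ℂ) • pauli1CLM) :
    CpNorm p V = 2 * (max (|k.1| : ℝ) (|k.2| : ℝ)) ^ p / ((|k.1| : ℝ) + (|k.2| : ℝ)) ^ p ∧
    (2 : ℝ) ^ ((1 : ℤ) - (p : ℤ)) ≤ CpNorm p V ∧ CpNorm p V ≤ 2 := by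
  set k1 : ℝ := (k.1 : ℝ) with hk1def
  set k2 : ℝ := (k.2 : ℝ) with hk2def
  set s : ℝ := |k1| + |k2| with hsdef
  set M : ℝ := max |k1| |k2| with hMdef
  set A : ℝ := 2 / s ^ p with hAdef
  -- basic inequalities
  have hM1 : (1:ℝ) ≤ M := by
    have h' : k.1 ≠ 0 ∨ k.2 ≠ 0 := by
      by_contra hcon
      push_neg at hcon
      exact hk (Prod.ext hcon.1 hcon.2)
    rcases h' with h1 | h2
    · have : (1:ℝ) ≤ |k1| := by
        rw [hk1def, ← Int.cast_abs]
        exact_mod_cast Int.one_le_abs h1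
      exact le_trans this (le_max_left _ _)
    · have : (1:ℝ) ≤ |k2| := by
        rw [hk2def, ← Int.cast_abs]
        exact_mod_cast Int.one_le_abs h2
      exact le_trans this (le_max_right _ _)
  have hM0 : (0:ℝ) ≤ M := le_trans zero_le_one hM1
  have hMs : M ≤ s := by
    rw [hMdef, hsdef]
    exact max_le (le_add_of_nonneg_right (abs_nonneg _)) (le_add_of_nonneg_left (abs_nonneg _))
  have hs1 : (1:ℝ) ≤ s := le_trans hM1 hMs
  have hs0 : (0:ℝ) < s := lt_of_lt_of_le one_pos hs1
  have hs2M : s ≤ 2 * M := by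
    rw [hsdef, hMdef, two_mul]
    exact add_le_add (le_max_left _ _) (le_max_right _ _)
  have hsp : (0:ℝ) < s ^ p := pow_pos hs0 p
  have hA : (0:ℝ) < A := by positivity
  have hcoe : ∀ (r : ℝ) (T : EuclideanSpace ℂ (Fin 2) →L[ℂ] EuclideanSpace ℂ (Fin 2)),
      ((r : ℝ) : ℂ) • T = r • T := fun r T => by
    rw [show ((r:ℝ):ℂ) = r • (1:ℂ) by simp [Complex.real_smul], smul_assoc, one_smul]
  -- the form of V
  have hVform : ∀ φ : Fin 2 → ℝ, V φ = (A * gg k1 0 (φ 0) * gg k2 0 (φ 1)) • pauli1CLM := by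
    intro φ
    rw [hV φ, hcoe]
    norm_num [gg]
  -- the iterated partial derivatives of V
  have listform : ∀ ms : List (Fin 2), listPDeriv V ms =
      fun x : Fin 2 → ℝ =>
        (A * gg k1 (ms.count 0) (x 0) * gg k2 (ms.count 1) (x 1)) • pauli1CLM := by
    intro ms
    induction ms with
    | nil =>
      funext x
      rw [listPDeriv, hVform x]
      simp
    | cons j js ih =>
      show pderiv1 j (listPDeriv V js) = _
      rw [ih, key_pderiv]
      funext x
      congr 2 <;> rw [List.count_cons] <;> fin_cases j <;> simp
  have normform : ∀ (ms : List (Fin 2)) (x : Fin 2 → ℝ),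
      ‖listPDeriv V ms x‖ = |A * gg k1 (ms.count 0) (x 0) * gg k2 (ms.count 1) (x 1)| := by
    intro ms x
    rw [listform ms]
    beta_reduce
    rw [norm_smul (α := ℝ) _ pauli1CLM, pauli_opNorm, mul_one, Real.norm_eq_abs]
  -- the set over which we take the sup
  set S : Set ℝ := {r : ℝ | ∃ (ms : List (Fin 2)) (x : Fin 2 → ℝ),
      ms.length ≤ p ∧ r = ‖listPDeriv V ms x‖} with hSdef
  have hCp : CpNorm p V = sSup S := rfl
  -- upper bound on elements of S
  have hub : ∀ r ∈ S, r ≤ A * M ^ p := by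
    rintro r ⟨ms, x, hlen, rfl⟩
    rw [normform]
    have hcount := count_sum_le ms
    calc |A * gg k1 (ms.count 0) (x 0) * gg k2 (ms.count 1) (x 1)|
        = A * |gg k1 (ms.count 0) (x 0)| * |gg k2 (ms.count 1) (x 1)| := by
          rw [abs_mul, abs_mul, abs_of_pos hA]
      _ ≤ A * |k1| ^ (ms.count 0) * |k2| ^ (ms.count 1) := by
          have h1 := gg_abs_le k1 (ms.count 0) (x 0)
          have h2 := gg_abs_le k2 (ms.count 1) (x 1)
          gcongr <;> first | exact hA.le | exact abs_nonneg _ | assumption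
      _ ≤ A * M ^ (ms.count 0) * M ^ (ms.count 1) := by
          have h1 : |k1| ≤ M := le_max_left _ _
          have h2 : |k2| ≤ M := le_max_right _ _
          gcongr <;> first | exact hA.le | exact abs_nonneg _ | assumption
      _ = A * M ^ (ms.count 0 + ms.count 1) := by rw [pow_add]; ring
      _ ≤ A * M ^ p := by
          have hle : ms.count 0 + ms.count 1 ≤ p := le_trans hcount hlen
          gcongr <;> first | exact hA.le | exact hM1 | assumption
  -- the sup value is attained
  have hmem : A * M ^ p ∈ S := by
    rcases le_total |k2| |k1| with h | h
    · obtain ⟨t, ht⟩ := gg_exists_max k1 p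
      refine ⟨List.replicate p 0, ![t, 0], List.length_replicate.le, ?_⟩
      rw [normform]
      have hc0 : (List.replicate p (0 : Fin 2)).count 0 = p := by simp
      have hc1 : (List.replicate p (0 : Fin 2)).count 1 = 0 := by simp [List.count_replicate]
      rw [hc0, hc1]
      have hgg1 : gg k2 0 (![t, (0:ℝ)] 1) = 1 := by simp [gg]
      have hx0 : (![t, (0:ℝ)] : Fin 2 → ℝ) 0 = t := rfl
      have hMv : M = |k1| := by rw [hMdef]; exact max_eq_left h
      rw [hgg1, hx0, mul_one, abs_mul, abs_of_pos hA, ht, hMv]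
    · obtain ⟨t, ht⟩ := gg_exists_max k2 p
      refine ⟨List.replicate p 1, ![0, t], List.length_replicate.le, ?_⟩
      rw [normform]
      have hc0 : (List.replicate p (1 : Fin 2)).count 0 = 0 := by simp [List.count_replicate]
      have hc1 : (List.replicate p (1 : Fin 2)).count 1 = p := by simp
      rw [hc0, hc1]
      have hgg1 : gg k1 0 (![(0:ℝ), t] 0) = 1 := by simp [gg]
      have hx1 : (![(0:ℝ), t] : Fin 2 → ℝ) 1 = t := rfl
      have hMv : M = |k2| := by rw [hMdef]; exact max_eq_right h
      rw [hgg1, hx1, mul_one, abs_mul, abs_of_pos hA, ht, hMv]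
  have hsup : CpNorm p V = A * M ^ p := by
    rw [hCp]
    exact le_antisymm (csSup_le ⟨_, hmem⟩ hub) (le_csSup ⟨A * M ^ p, hub⟩ hmem)
  have heq : A * M ^ p = 2 * M ^ p / s ^ p := by
    rw [hAdef]; ring
  refine ⟨by rw [hsup, heq], ?_, ?_⟩
  · -- lower bound
    rw [hsup, heq]
    have h2 : (2:ℝ) ^ ((1 : ℤ) - (p : ℤ)) = 2 / 2 ^ p := by
      rw [zpow_sub₀ (two_ne_zero), zpow_one, zpow_natCast]
    rw [h2, div_le_div_iff₀ (by positivity) hsp]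
    calc 2 * s ^ p ≤ 2 * (2 * M) ^ p := by gcongr
      _ = 2 * M ^ p * 2 ^ p := by rw [mul_pow]; ring
  · -- upper bound
    rw [hsup, heq, div_le_iff₀ hsp]
    have : M ^ p ≤ s ^ p := pow_le_pow_left₀ hM0 hMs p
    nlinarith
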